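/- arXiv:1406.0347 — 3 statements merged into one kernel-verified Lean document; each statement's English description precedes it below -/
import Mathlib

section
/- Let (G_{n_1},...,G_{n_k}) be a fully interconnected graph decomposition of graphs G_n indexed so that block i grows. If lim_{n_i→∞} P_{G_{n_i},t}^x(x) exists for a vertex x in block i, then lim_{n_i→∞} P_{G_n,t}^x(x) = lim_{n_i→∞} P_{G_{n_i},t}^x(x). -/
open Matrix Finset Filter
open NormedSpace

/-- CTQW transition probability on a finite simple graph. -/
noncomputable def ctqwP {V : Type*} [Fintype V] [DecidableEq V]
    (G : SimpleGraph V) [DecidableRel G.Adj] (t : ℝ) (x y : V) : ℝ :=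
  ‖(NormedSpace.exp ((Complex.I * t) • (G.lapMatrix ℂ))) x y‖ ^ 2

/-- The induced subgraph of `G` on the `i`-th block. -/
def blockGraph {k : ℕ} {n : Fin k → ℕ} (G : SimpleGraph (Σ i : Fin k, Fin (n i)))
    (i : Fin k) : SimpleGraph (Fin (n i)) where
  Adj a b := G.Adj ⟨i, a⟩ ⟨i, b⟩
  symm := ⟨fun _ _ h => G.adj_symm h⟩
  loopless := ⟨fun _ h => G.loopless.irrefl _ h⟩

def blockGraphDecidable {k : ℕ} {n : Fin k → ℕ} (G : SimpleGraph (Σ i : Fin k, Fin (n i)))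
    (hdec : DecidableRel G.Adj) (i : Fin k) : DecidableRel (blockGraph G i).Adj :=
  fun a b => hdec ⟨i, a⟩ ⟨i, b⟩

lemma exp_intertwine {m p : Type*} [Fintype m] [DecidableEq m] [Fintype p] [DecidableEq p]
    (A : Matrix m m ℂ) (B : Matrix p p ℂ) (X : Matrix m p ℂ) (h : A * X = X * B) :
    exp A * X = X * exp B := by
  letI : SeminormedRing (Matrix m m ℂ) := Matrix.linftyOpSemiNormedRing
  letI : NormedRing (Matrix m m ℂ) := Matrix.linftyOpNormedRing
  letI : NormedAlgebra ℂ (Matrix m m ℂ) := Matrix.linftyOpNormedAlgebra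
  letI : SeminormedRing (Matrix p p ℂ) := Matrix.linftyOpSemiNormedRing
  letI : NormedRing (Matrix p p ℂ) := Matrix.linftyOpNormedRing
  letI : NormedAlgebra ℂ (Matrix p p ℂ) := Matrix.linftyOpNormedAlgebra
  letI : NormedAddCommGroup (Matrix m p ℂ) := Matrix.linftyOpNormedAddCommGroup
  letI : NormedSpace ℂ (Matrix m p ℂ) := Matrix.linftyOpNormedSpace
  have hpow : ∀ N : ℕ, A ^ N * X = X * B ^ N := by
    intro N; induction N with
    | zero => simp
    | succ N ih =>
      rw [pow_succ, Matrix.mul_assoc, h, ← Matrix.mul_assoc, ih, Matrix.mul_assoc, ← pow_succ]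
  have hsumA : Summable (fun j : ℕ => ((j.factorial : ℂ)⁻¹) • A ^ j) := expSeries_summable' A
  have hsumB : Summable (fun j : ℕ => ((j.factorial : ℂ)⁻¹) • B ^ j) := expSeries_summable' B
  let f : Matrix m m ℂ →ₗ[ℂ] Matrix m p ℂ :=
    { toFun := fun M => M * X
      map_add' := fun a b => Matrix.add_mul a b X
      map_smul' := fun c M => Matrix.smul_mul c M X }
  let g : Matrix p p ℂ →ₗ[ℂ] Matrix m p ℂ :=
    { toFun := fun M => X * M
      map_add' := fun a b => Matrix.mul_add X a b
      map_smul' := fun c M => Matrix.mul_smul X c M }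
  have key : f.toContinuousLinearMap (∑' j : ℕ, ((j.factorial : ℂ)⁻¹) • A ^ j)
      = g.toContinuousLinearMap (∑' j : ℕ, ((j.factorial : ℂ)⁻¹) • B ^ j) := by
    rw [ContinuousLinearMap.map_tsum _ hsumA, ContinuousLinearMap.map_tsum _ hsumB]
    refine tsum_congr fun j => ?_
    show (((j.factorial : ℂ)⁻¹) • A ^ j) * X = X * (((j.factorial : ℂ)⁻¹) • B ^ j)
    rw [Matrix.smul_mul, Matrix.mul_smul, hpow]
  simpa [exp_eq_tsum ℂ, f, g] using key


lemma exp_smul_one_mat {m : Type*} [Fintype m] [DecidableEq m] (z : ℂ) :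
    exp (z • (1 : Matrix m m ℂ)) = Complex.exp z • (1 : Matrix m m ℂ) := by
  letI : SeminormedRing (Matrix m m ℂ) := Matrix.linftyOpSemiNormedRing
  letI : NormedRing (Matrix m m ℂ) := Matrix.linftyOpNormedRing
  letI : NormedAlgebra ℂ (Matrix m m ℂ) := Matrix.linftyOpNormedAlgebra
  have h1 : z • (1 : Matrix m m ℂ) = algebraMap ℂ (Matrix m m ℂ) z :=
    (Algebra.algebraMap_eq_smul_one z).symm
  rw [h1, Complex.exp_eq_exp_ℂ, ← Algebra.algebraMap_eq_smul_one]
  exact (algebraMap_exp_comm z).symm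

lemma exp_skew_unitary {m : Type*} [Fintype m] [DecidableEq m] (A : Matrix m m ℂ)
    (hA : Aᴴ = -A) :
    exp A * (exp A)ᴴ = 1 ∧ (exp A)ᴴ * exp A = 1 := by
  rw [← Matrix.exp_conjTranspose, hA,
    ← Matrix.exp_add_of_commute A (-A) (Commute.refl A).neg_right,
    ← Matrix.exp_add_of_commute (-A) A (Commute.refl A).neg_left,
    add_neg_cancel, neg_add_cancel, exp_zero]
  exact ⟨rfl, rfl⟩

lemma lap_conjTranspose {V : Type*} [Fintype V] [DecidableEq V] (G : SimpleGraph V)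
    [DecidableRel G.Adj] : (G.lapMatrix ℂ)ᴴ = G.lapMatrix ℂ := by
  have hs : (G.lapMatrix ℂ)ᵀ = G.lapMatrix ℂ := G.isSymm_lapMatrix (R := ℂ)
  ext v w
  have h2 : G.lapMatrix ℂ w v = G.lapMatrix ℂ v w := by
    conv_lhs => rw [← hs]
    rw [Matrix.transpose_apply]
  rw [conjTranspose_apply, h2]
  simp only [SimpleGraph.lapMatrix, Matrix.sub_apply, SimpleGraph.degMatrix,
    Matrix.diagonal_apply, SimpleGraph.adjMatrix_apply, star_sub]
  split_ifs <;> simp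

lemma skew_smul_lap {V : Type*} [Fintype V] [DecidableEq V] (G : SimpleGraph V)
    [DecidableRel G.Adj] (t : ℝ) :
    ((Complex.I * t) • G.lapMatrix ℂ)ᴴ = -((Complex.I * t) • G.lapMatrix ℂ) := by
  rw [conjTranspose_smul, lap_conjTranspose, ← neg_smul]
  congr 1
  simp [Complex.ext_iff]

lemma unit_rows {m : Type*} [Fintype m] [DecidableEq m] (U : Matrix m m ℂ)
    (hU : U * Uᴴ = 1) (v : m) : ∑ w : m, ‖U v w‖ ^ 2 = 1 := by
  have h := congrFun (congrFun hU v) v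
  rw [Matrix.mul_apply, Matrix.one_apply_eq] at h
  have h2 : ∑ w : m, ((‖U v w‖ ^ 2 : ℝ) : ℂ) = 1 := by
    rw [← h]
    refine Finset.sum_congr rfl fun w _ => ?_
    rw [conjTranspose_apply, Complex.sq_norm, ← Complex.mul_conj]; rfl
  have := h2
  rw [← Complex.ofReal_sum] at this
  exact_mod_cast this

section Key

variable {k : ℕ} {n : Fin k → ℕ} (G : SimpleGraph (Σ i : Fin k, Fin (n i)))
  [DecidableRel G.Adj]
  (R : Fin k → Fin k → Prop) [DecidableRel R]
  (i : Fin k) [DecidableRel (blockGraph G i).Adj]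

lemma sigma_sum (f : (Σ j : Fin k, Fin (n j)) → ℂ) :
    ∑ v : Σ j : Fin k, Fin (n j), f v = ∑ j : Fin k, ∑ b : Fin (n j), f ⟨j, b⟩ := by
  rw [← Finset.univ_sigma_univ, Finset.sum_sigma]

lemma degree_split
    (hcross : ∀ v w : Σ j : Fin k, Fin (n j), v.1 ≠ w.1 → (G.Adj v w ↔ R v.1 w.1))
    (b : Fin (n i)) :
    (G.degree ⟨i, b⟩ : ℂ) = ((blockGraph G i).degree b : ℂ)
      + ∑ v : Σ j : Fin k, Fin (n j), (if v.1 ≠ i ∧ R i v.1 then 1 else 0) := by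
  rw [SimpleGraph.degree_eq_sum_if_adj, SimpleGraph.degree_eq_sum_if_adj,
    sigma_sum, sigma_sum (f := fun v => if v.1 ≠ i ∧ R i v.1 then 1 else 0)]
  rw [← Finset.add_sum_erase (a := i) univ _ (mem_univ i),
      ← Finset.add_sum_erase (a := i) univ
        (f := fun j => ∑ b' : Fin (n j), if (⟨j, b'⟩ : Σ j, Fin (n j)).1 ≠ i ∧ R i j then (1:ℂ) else 0)
        (mem_univ i)]
  have h1 : ∑ b' : Fin (n i), (if (⟨i, b'⟩ : Σ j, Fin (n j)).1 ≠ i ∧ R i i then (1:ℂ) else 0) = 0 := by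
    simp
  rw [h1, zero_add]
  congr 1
  · refine Finset.sum_congr rfl fun b' _ => ?_
    exact if_congr (Iff.rfl (a := (blockGraph G i).Adj b b')) rfl rfl
  · refine Finset.sum_congr rfl fun j hj => Finset.sum_congr rfl fun b' _ => ?_
    have hji : j ≠ i := (Finset.mem_erase.mp hj).1
    have := hcross ⟨i, b⟩ ⟨j, b'⟩ (by simpa using hji.symm)
    simp only [this, ne_eq, hji, not_false_iff, true_and]

end Key

section Key2

variable {k : ℕ} {n : Fin k → ℕ} (G : SimpleGraph (Σ i : Fin k, Fin (n i)))
  [DecidableRel G.Adj]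
  (R : Fin k → Fin k → Prop) [DecidableRel R]
  (i : Fin k) [DecidableRel (blockGraph G i).Adj]

/-- number of cross-neighbours of any vertex in block `i`. -/
def crossN : ℕ := ∑ v : Σ j : Fin k, Fin (n j), if v.1 ≠ i ∧ R i v.1 then 1 else 0

lemma crossN_cast :
    ((crossN (n := n) R i : ℕ) : ℂ)
      = ∑ v : Σ j : Fin k, Fin (n j), (if v.1 ≠ i ∧ R i v.1 then 1 else 0) := by
  rw [crossN, Nat.cast_sum]
  exact Finset.sum_congr rfl fun v _ => by split_ifs <;> simp

lemma lap_block_entry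
    (hcross : ∀ v w : Σ j : Fin k, Fin (n j), v.1 ≠ w.1 → (G.Adj v w ↔ R v.1 w.1))
    (b a : Fin (n i)) :
    G.lapMatrix ℂ ⟨i, b⟩ ⟨i, a⟩
      = (blockGraph G i).lapMatrix ℂ b a + (if b = a then (crossN (n := n) R i : ℂ) else 0) := by
  simp only [SimpleGraph.lapMatrix, Matrix.sub_apply, SimpleGraph.degMatrix,
    Matrix.diagonal_apply, SimpleGraph.adjMatrix_apply]
  have hadj : (G.Adj ⟨i, b⟩ ⟨i, a⟩) = ((blockGraph G i).Adj b a) := rfl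
  by_cases hba : b = a
  · subst hba
    have e1 : ((⟨i, b⟩ : Σ j, Fin (n j)) = ⟨i, b⟩) := rfl
    simp only [if_pos e1, eq_self_iff_true, if_true]
    rw [degree_split G R i hcross b, ← crossN_cast]
    have : (if G.Adj ⟨i, b⟩ ⟨i, b⟩ then (1:ℂ) else 0)
        = (if (blockGraph G i).Adj b b then (1:ℂ) else 0) := if_congr Iff.rfl rfl rfl
    rw [this]
    ring
  · have h1 : ¬((⟨i, b⟩ : Σ j, Fin (n j)) = ⟨i, a⟩) := by simp [hba]
    rw [if_neg h1, if_neg hba, if_neg hba, add_zero, zero_sub, zero_sub]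
    exact congrArg Neg.neg (if_congr Iff.rfl rfl rfl)

lemma lap_cross_entry
    (hcross : ∀ v w : Σ j : Fin k, Fin (n j), v.1 ≠ w.1 → (G.Adj v w ↔ R v.1 w.1))
    (j : Fin k) (hj : j ≠ i) (b : Fin (n j)) (a : Fin (n i)) :
    G.lapMatrix ℂ ⟨j, b⟩ ⟨i, a⟩ = -(if R j i then 1 else 0) := by
  simp only [SimpleGraph.lapMatrix, Matrix.sub_apply, SimpleGraph.degMatrix,
    Matrix.diagonal_apply, SimpleGraph.adjMatrix_apply]
  have h1 : ¬((⟨j, b⟩ : Σ j, Fin (n j)) = ⟨i, a⟩) := fun h => hj (congrArg Sigma.fst h)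
  have h2 : G.Adj ⟨j, b⟩ ⟨i, a⟩ ↔ R j i := hcross _ _ (by simpa using hj)
  rw [if_neg h1, if_congr h2 rfl rfl, zero_sub]

end Key2

section Key3

variable {k : ℕ} {n : Fin k → ℕ} (G : SimpleGraph (Σ i : Fin k, Fin (n i)))
  [DecidableRel G.Adj]
  (R : Fin k → Fin k → Prop) [DecidableRel R]
  (i : Fin k) [DecidableRel (blockGraph G i).Adj]

/-- the "delta minus block average" rectangular matrix. -/
noncomputable def Xmat : Matrix (Σ j : Fin k, Fin (n j)) (Fin (n i)) ℂ :=
  Matrix.of fun v a =>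
    (if v = ⟨i, a⟩ then 1 else 0) - (if v.1 = i then ((n i : ℂ))⁻¹ else 0)

omit [DecidableRel G.Adj] [DecidableRel R] in
lemma mulX_apply (M : Matrix (Σ j : Fin k, Fin (n j)) (Σ j : Fin k, Fin (n j)) ℂ)
    (v : Σ j : Fin k, Fin (n j)) (a : Fin (n i)) :
    (M * Xmat (n := n) i) v a
      = M v ⟨i, a⟩ - (n i : ℂ)⁻¹ * ∑ b : Fin (n i), M v ⟨i, b⟩ := by
  rw [Matrix.mul_apply]
  simp only [Xmat, Matrix.of_apply, mul_sub]
  rw [Finset.sum_sub_distrib]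
  congr 1
  · simp_rw [mul_ite, mul_one, mul_zero]
    exact (Finset.sum_ite_eq' univ (⟨i, a⟩ : Σ j, Fin (n j)) (fun w => M v w)).trans
      (if_pos (mem_univ _))
  · rw [sigma_sum (f := fun w => M v w * (if w.1 = i then ((n i : ℂ))⁻¹ else 0))]
    have : ∀ j : Fin k, ∑ b : Fin (n j), M v ⟨j, b⟩ * (if (⟨j, b⟩ : Σ j, Fin (n j)).1 = i then ((n i : ℂ))⁻¹ else 0)
        = (if j = i then (∑ b : Fin (n j), M v ⟨j, b⟩) * (n i : ℂ)⁻¹ else 0) := by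
      intro j
      by_cases hj : j = i
      · simp [hj, Finset.sum_mul]
      · simp [hj]
    rw [Finset.sum_congr rfl fun j _ => this j, Finset.sum_ite_eq' univ i
      (fun j => (∑ b : Fin (n j), M v ⟨j, b⟩) * (n i : ℂ)⁻¹)]
    simp [mul_comm]

omit [DecidableRel G.Adj] [DecidableRel R] in
lemma Xmul_apply_block (M : Matrix (Fin (n i)) (Fin (n i)) ℂ) (b0 a : Fin (n i)) :
    (Xmat (n := n) i * M) ⟨i, b0⟩ a = M b0 a - (n i : ℂ)⁻¹ * ∑ b : Fin (n i), M b a := by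
  rw [Matrix.mul_apply]
  simp only [Xmat, Matrix.of_apply]
  have he : ∀ b : Fin (n i), (if (⟨i, b0⟩ : Σ j, Fin (n j)) = ⟨i, b⟩ then (1:ℂ) else 0)
      = if b0 = b then 1 else 0 := fun b => if_congr (by simp) rfl rfl
  simp only [he, if_pos rfl, sub_mul, ite_mul, one_mul, zero_mul]
  rw [Finset.sum_sub_distrib, Finset.sum_ite_eq univ b0 (fun b => M b a)]
  simp [Finset.mul_sum]

omit [DecidableRel G.Adj] [DecidableRel R] in
lemma Xmul_apply_off (M : Matrix (Fin (n i)) (Fin (n i)) ℂ) (j : Fin k) (hj : j ≠ i)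
    (b0 : Fin (n j)) (a : Fin (n i)) :
    (Xmat (n := n) i * M) ⟨j, b0⟩ a = 0 := by
  rw [Matrix.mul_apply]
  refine Finset.sum_eq_zero fun b _ => ?_
  have h1 : ¬((⟨j, b0⟩ : Σ j, Fin (n j)) = ⟨i, b⟩) := fun h => hj (congrArg Sigma.fst h)
  simp [Xmat, h1, hj]

lemma lap_row_sum_zero (a : Fin (n i)) :
    ∑ b : Fin (n i), (blockGraph G i).lapMatrix ℂ a b = 0 := by
  have h := congrFun ((blockGraph G i).lapMatrix_mulVec_const_eq_zero (R := ℂ)) a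
  simpa [Matrix.mulVec, dotProduct] using h

lemma lap_col_sum_zero (a : Fin (n i)) :
    ∑ b : Fin (n i), (blockGraph G i).lapMatrix ℂ b a = 0 := by
  have hs : ((blockGraph G i).lapMatrix ℂ)ᵀ = (blockGraph G i).lapMatrix ℂ :=
    (blockGraph G i).isSymm_lapMatrix (R := ℂ)
  have : ∀ b, (blockGraph G i).lapMatrix ℂ b a = (blockGraph G i).lapMatrix ℂ a b := by
    intro b
    conv_lhs => rw [← hs]
    rw [Matrix.transpose_apply]
  rw [Finset.sum_congr rfl fun b _ => this b]
  exact lap_row_sum_zero G i a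

lemma lap_intertwine
    (hcross : ∀ v w : Σ j : Fin k, Fin (n j), v.1 ≠ w.1 → (G.Adj v w ↔ R v.1 w.1))
    (hN : 0 < n i) :
    G.lapMatrix ℂ * Xmat (n := n) i
      = Xmat (n := n) i * ((blockGraph G i).lapMatrix ℂ + (crossN (n := n) R i : ℂ) • 1) := by
  have hNC : ((n i : ℂ)) ≠ 0 := Nat.cast_ne_zero.mpr hN.ne'
  ext ⟨j, b0⟩ a
  rw [mulX_apply]
  by_cases hj : j = i
  · subst hj
    rw [Xmul_apply_block]
    have hsum : ∑ b : Fin (n j), G.lapMatrix ℂ ⟨j, b0⟩ ⟨j, b⟩ = (crossN (n := n) R j : ℂ) := by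
      rw [Finset.sum_congr rfl fun b _ => lap_block_entry G R j hcross b0 b,
        Finset.sum_add_distrib, lap_row_sum_zero G j, Finset.sum_ite_eq univ b0
          (fun _ => (crossN (n := n) R j : ℂ))]
      simp
    have hBsum : ∑ b : Fin (n j), ((blockGraph G j).lapMatrix ℂ
          + (crossN (n := n) R j : ℂ) • 1) b a = (crossN (n := n) R j : ℂ) := by
      simp only [Matrix.add_apply, Matrix.smul_apply, Matrix.one_apply, smul_eq_mul, mul_ite,
        mul_one, mul_zero]
      rw [Finset.sum_add_distrib, lap_col_sum_zero G j,
        Finset.sum_ite_eq' univ a (fun _ => (crossN (n := n) R j : ℂ))]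
      simp
    rw [hsum, hBsum, lap_block_entry G R j hcross b0 a]
    simp only [Matrix.add_apply, Matrix.smul_apply, Matrix.one_apply, smul_eq_mul, mul_ite,
      mul_one, mul_zero]
  · rw [Xmul_apply_off i _ j hj b0 a]
    have hc : ∀ b : Fin (n i), G.lapMatrix ℂ ⟨j, b0⟩ ⟨i, b⟩ = -(if R j i then 1 else 0) :=
      fun b => lap_cross_entry G R i hcross j hj b0 b
    rw [hc a, Finset.sum_congr rfl fun b _ => hc b, Finset.sum_const, card_univ,
      Fintype.card_fin]
    rw [nsmul_eq_mul]
    field_simp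
    ring

end Key3

section KeyBound

variable {k : ℕ} {n : Fin k → ℕ} (G : SimpleGraph (Σ i : Fin k, Fin (n i)))
  [DecidableRel G.Adj]
  (R : Fin k → Fin k → Prop) [DecidableRel R]
  (i : Fin k) [DecidableRel (blockGraph G i).Adj]

set_option maxHeartbeats 1000000 in
lemma key_bound
    (hcross : ∀ v w : Σ j : Fin k, Fin (n j), v.1 ≠ w.1 → (G.Adj v w ↔ R v.1 w.1))
    (x : Fin (n i)) (t : ℝ) :
    |ctqwP G t ⟨i, x⟩ ⟨i, x⟩ - ctqwP (blockGraph G i) t x x| ≤ 4 / Real.sqrt (n i) := by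
  simp only [ctqwP]
  have hN : 0 < n i := x.pos
  have hNR : (0:ℝ) < (n i : ℝ) := by exact_mod_cast hN
  have hsq : 0 < Real.sqrt (n i) := Real.sqrt_pos.mpr hNR
  set c : ℂ := (crossN (n := n) R i : ℂ) with hc
  set A : Matrix (Σ j : Fin k, Fin (n j)) (Σ j : Fin k, Fin (n j)) ℂ :=
    (Complex.I * t) • G.lapMatrix ℂ with hA
  set Bi : Matrix (Fin (n i)) (Fin (n i)) ℂ :=
    (Complex.I * t) • (blockGraph G i).lapMatrix ℂ with hBi
  set B : Matrix (Fin (n i)) (Fin (n i)) ℂ :=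
    (Complex.I * t) • ((blockGraph G i).lapMatrix ℂ + c • 1) with hB
  set U : Matrix _ _ ℂ := NormedSpace.exp A with hU
  set u : Matrix _ _ ℂ := NormedSpace.exp Bi with hu
  set e : ℂ := Complex.exp (Complex.I * t * c) with he
  -- the intertwining relation
  have hint : A * Xmat (n := n) i = Xmat (n := n) i * B := by
    rw [hA, hB, Matrix.smul_mul, Matrix.mul_smul, lap_intertwine G R i hcross hN]
  have hexp : U * Xmat (n := n) i = Xmat (n := n) i * NormedSpace.exp B :=
    exp_intertwine A B _ hint
  -- computing exp B
  have hBexp : NormedSpace.exp B = e • u := by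
    have hsplit : B = Bi + (Complex.I * t * c) • (1 : Matrix (Fin (n i)) (Fin (n i)) ℂ) := by
      rw [hB, hBi, smul_add, smul_smul]
    have hcomm : Commute Bi ((Complex.I * t * c) • (1 : Matrix (Fin (n i)) (Fin (n i)) ℂ)) := by
      exact (Commute.one_right Bi).smul_right _
    rw [hsplit, Matrix.exp_add_of_commute _ _ hcomm, exp_smul_one_mat, Matrix.mul_smul,
      mul_one, ← hu, ← he]
  -- entry extraction
  have h1 : (U * Xmat (n := n) i) ⟨i, x⟩ x
      = U ⟨i, x⟩ ⟨i, x⟩ - ((n i : ℂ))⁻¹ * ∑ b : Fin (n i), U ⟨i, x⟩ ⟨i, b⟩ :=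
    mulX_apply i U ⟨i, x⟩ x
  have h2 : (Xmat (n := n) i * NormedSpace.exp B) ⟨i, x⟩ x
      = e * (u x x - ((n i : ℂ))⁻¹ * ∑ b : Fin (n i), u b x) := by
    rw [hBexp, Matrix.mul_smul, Matrix.smul_apply, Xmul_apply_block i u x x, smul_eq_mul]
  have hentry : U ⟨i, x⟩ ⟨i, x⟩ - e * u x x
      = ((n i : ℂ))⁻¹ * (∑ b : Fin (n i), U ⟨i, x⟩ ⟨i, b⟩)
        - e * (((n i : ℂ))⁻¹ * ∑ b : Fin (n i), u b x) := by
    have h0 := congrFun (congrFun hexp ⟨i, x⟩) x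
    rw [h1, h2] at h0
    linear_combination h0
  -- unitarity
  have skewA : Aᴴ = -A := skew_smul_lap G t
  have skewB : Biᴴ = -Bi := skew_smul_lap (blockGraph G i) t
  have hUrow : ∑ w : Σ j : Fin k, Fin (n j), ‖U ⟨i, x⟩ w‖ ^ 2 = 1 :=
    unit_rows U (exp_skew_unitary A skewA).1 ⟨i, x⟩
  have hucol : ∑ b : Fin (n i), ‖u b x‖ ^ 2 = 1 := by
    have huu : uᴴ * (uᴴ)ᴴ = 1 := by
      rw [conjTranspose_conjTranspose]
      exact (exp_skew_unitary Bi skewB).2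
    have h := unit_rows uᴴ huu x
    simpa [Matrix.conjTranspose_apply, Complex.norm_conj, RCLike.star_def] using h
  -- the block part of the U-row  has square sum at most 1
  have hsubrow : ∑ b : Fin (n i), ‖U ⟨i, x⟩ ⟨i, b⟩‖ ^ 2 ≤ 1 := by
    rw [← hUrow]
    have himg : ∑ b : Fin (n i), ‖U ⟨i, x⟩ ⟨i, b⟩‖ ^ 2
        = ∑ w ∈ univ.image (fun b : Fin (n i) => (⟨i, b⟩ : Σ j, Fin (n j))),
            ‖U ⟨i, x⟩ w‖ ^ 2 := by
      rw [Finset.sum_image (fun b _ b' _ h => by simpa using h)]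
    rw [himg]
    exact Finset.sum_le_sum_of_subset_of_nonneg (subset_univ _) (fun w _ _ => by positivity)
  -- Cauchy-Schwarz bounds on the row/column sums
  have hCS : ∀ (f : Fin (n i) → ℂ), (∑ b, ‖f b‖ ^ 2) ≤ 1 →
      ‖∑ b, f b‖ ≤ Real.sqrt (n i) := by
    intro f hf
    have h1 : ‖∑ b, f b‖ ≤ ∑ b, ‖f b‖ := norm_sum_le _ _
    have h2 : (∑ b, ‖f b‖) ^ 2 ≤ (n i : ℝ) * ∑ b, ‖f b‖ ^ 2 := by
      simpa using sq_sum_le_card_mul_sum_sq (s := (univ : Finset (Fin (n i))))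
        (f := fun b => ‖f b‖)
    have h3 : (∑ b, ‖f b‖) ^ 2 ≤ (n i : ℝ) :=
      h2.trans (by nlinarith)
    have h4 : (∑ b, ‖f b‖) ≤ Real.sqrt (n i) :=
      (Real.le_sqrt (Finset.sum_nonneg fun b _ => norm_nonneg _) hNR.le).mpr h3
    exact h1.trans h4
  have hSg : ‖∑ b : Fin (n i), U ⟨i, x⟩ ⟨i, b⟩‖ ≤ Real.sqrt (n i) :=
    hCS _ hsubrow
  have hSu : ‖∑ b : Fin (n i), u b x‖ ≤ Real.sqrt (n i) :=
    hCS _ (le_of_eq hucol)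
  have habs_e : ‖e‖ = 1 := by
    rw [he, Complex.norm_exp]
    have : (Complex.I * t * c).re = 0 := by
      rw [hc]
      simp [Complex.mul_re, Complex.mul_im]
    rw [this, Real.exp_zero]
  -- bound the error term
  have hNinv : ‖((n i : ℂ))⁻¹‖ = ((n i : ℝ))⁻¹ := by
    rw [norm_inv, Complex.norm_natCast]
  have hinvsqrt : ((n i : ℝ))⁻¹ * Real.sqrt (n i) = (Real.sqrt (n i))⁻¹ := by
    rw [← Real.mul_self_sqrt hNR.le]
    field_simp
    rw [Real.sqrt_sq hsq.le]
  have herr : ‖U ⟨i, x⟩ ⟨i, x⟩ - e * u x x‖ ≤ 2 / Real.sqrt (n i) := by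
    rw [hentry]
    have t1 : ‖((n i : ℂ))⁻¹ * (∑ b : Fin (n i), U ⟨i, x⟩ ⟨i, b⟩)‖
        ≤ (Real.sqrt (n i))⁻¹ := by
      rw [norm_mul, hNinv]
      calc ((n i : ℝ))⁻¹ * ‖∑ b : Fin (n i), U ⟨i, x⟩ ⟨i, b⟩‖
          ≤ ((n i : ℝ))⁻¹ * Real.sqrt (n i) := by
            exact mul_le_mul_of_nonneg_left hSg (by positivity)
        _ = (Real.sqrt (n i))⁻¹ := hinvsqrt
    have t2 : ‖e * (((n i : ℂ))⁻¹ * ∑ b : Fin (n i), u b x)‖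
        ≤ (Real.sqrt (n i))⁻¹ := by
      rw [norm_mul, habs_e, one_mul, norm_mul, hNinv]
      calc ((n i : ℝ))⁻¹ * ‖∑ b : Fin (n i), u b x‖
          ≤ ((n i : ℝ))⁻¹ * Real.sqrt (n i) := by
            exact mul_le_mul_of_nonneg_left hSu (by positivity)
        _ = (Real.sqrt (n i))⁻¹ := hinvsqrt
    calc ‖((n i : ℂ))⁻¹ * (∑ b : Fin (n i), U ⟨i, x⟩ ⟨i, b⟩)
            - e * (((n i : ℂ))⁻¹ * ∑ b : Fin (n i), u b x)‖
        ≤ ‖((n i : ℂ))⁻¹ * (∑ b : Fin (n i), U ⟨i, x⟩ ⟨i, b⟩)‖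
          + ‖e * (((n i : ℂ))⁻¹ * ∑ b : Fin (n i), u b x)‖ := by
          exact (norm_sub_le _ _)
      _ ≤ (Real.sqrt (n i))⁻¹ + (Real.sqrt (n i))⁻¹ := add_le_add t1 t2
      _ = 2 / Real.sqrt (n i) := by ring
  -- assemble
  set α : ℝ := ‖U ⟨i, x⟩ ⟨i, x⟩‖ with hα
  set β : ℝ := ‖u x x‖ with hβ
  have hαβdiff : |α - β| ≤ 2 / Real.sqrt (n i) := by
    have hβ' : β = ‖e * u x x‖ := by rw [norm_mul, habs_e, one_mul]
    rw [hβ']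
    exact (abs_norm_sub_norm_le _ _).trans herr
  have hα1 : α ≤ 1 := by
    have : α ^ 2 ≤ 1 := by
      rw [← hUrow]
      exact Finset.single_le_sum (f := fun w => ‖U ⟨i, x⟩ w‖ ^ 2)
        (fun w _ => by positivity) (mem_univ _)
    nlinarith [norm_nonneg (U ⟨i, x⟩ ⟨i, x⟩)]
  have hβ1 : β ≤ 1 := by
    have : β ^ 2 ≤ 1 := by
      rw [← hucol]
      exact Finset.single_le_sum (f := fun b => ‖u b x‖ ^ 2)
        (fun b _ => by positivity) (mem_univ _)
    nlinarith [norm_nonneg (u x x)]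
  have hfin : |α ^ 2 - β ^ 2| ≤ 4 / Real.sqrt (n i) := by
    have h : α ^ 2 - β ^ 2 = (α + β) * (α - β) := by ring
    rw [h, abs_mul]
    have hab : |α + β| ≤ 2 := by
      rw [abs_of_nonneg (by positivity)]
      linarith
    calc |α + β| * |α - β| ≤ 2 * (2 / Real.sqrt (n i)) := by
          exact mul_le_mul hab hαβdiff (abs_nonneg _) (by norm_num)
      _ = 4 / Real.sqrt (n i) := by ring
  exact hfin

end KeyBound


/-- If the return probability of the CTQW on the growing block converges, the return
probability on the whole graph converges to the same limit. -/
theorem ctqw_return_probability_limit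
    {k : ℕ} (n : ℕ → Fin k → ℕ)
    (G : (m : ℕ) → SimpleGraph (Σ i : Fin k, Fin (n m i)))
    (hdec : ∀ m, DecidableRel (G m).Adj)
    (R : ℕ → Fin k → Fin k → Prop) (hRdec : ∀ m, DecidableRel (R m))
    (hcross : ∀ m, ∀ v w : Σ i : Fin k, Fin (n m i),
      v.1 ≠ w.1 → ((G m).Adj v w ↔ R m v.1 w.1))
    (i : Fin k) (hgrow : Tendsto (fun m => n m i) atTop atTop)
    (x : (m : ℕ) → Fin (n m i)) (t : ℝ) (ht : 0 ≤ t) (L : ℝ)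
    (hlim : Tendsto (fun m =>
        @ctqwP _ _ _ (blockGraph (G m) i) (blockGraphDecidable (G m) (hdec m) i) t (x m) (x m)) atTop (nhds L)) :
    Tendsto (fun m => @ctqwP _ _ _ (G m) (hdec m) t ⟨i, x m⟩ ⟨i, x m⟩) atTop (nhds L) := by
  set Pg : ℕ → ℝ := fun m => @ctqwP _ _ _ (G m) (hdec m) t ⟨i, x m⟩ ⟨i, x m⟩ with hPg
  set Pb : ℕ → ℝ := fun m =>
    @ctqwP _ _ _ (blockGraph (G m) i) (blockGraphDecidable (G m) (hdec m) i) t (x m) (x m) with hPb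
  have hbound : ∀ m, |Pg m - Pb m| ≤ 4 / Real.sqrt (n m i) := by
    intro m
    letI := hdec m
    letI := hRdec m
    letI := blockGraphDecidable (G m) (hdec m) i
    exact key_bound (G m) (R m) i (hcross m) (x m) t
  have h0 : Tendsto (fun m => ((n m i : ℕ) : ℝ)) atTop atTop :=
    tendsto_natCast_atTop_atTop.comp hgrow
  have hsqrt : Tendsto Real.sqrt atTop atTop := by
    rw [tendsto_atTop_atTop]
    intro b
    refine ⟨b ^ 2, fun a ha => ?_⟩
    have h := Real.sqrt_le_sqrt ha
    rw [Real.sqrt_sq_eq_abs] at h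
    exact (le_abs_self b).trans h
  have h1 : Tendsto (fun m => Real.sqrt (n m i)) atTop atTop := hsqrt.comp h0
  have hdiv : Tendsto (fun m => 4 / Real.sqrt (n m i)) atTop (nhds 0) :=
    Tendsto.div_atTop tendsto_const_nhds h1
  have hdiff : Tendsto (fun m => Pg m - Pb m) atTop (nhds 0) :=
    squeeze_zero_norm (fun m => by simpa [Real.norm_eq_abs] using hbound m) hdiv
  have hfinal := hlim.add hdiff
  simp only [add_zero] at hfinal
  have heq : (fun m => Pb m + (Pg m - Pb m)) = Pg := by
    funext m; ring
  rwa [heq] at hfinal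
end

section
/- Let G_n be a simple graph on n vertices and let x be a dominating vertex (a vertex adjacent to all other n−1 vertices). Then for all t and all vertices y, P_{G_n,t}^x(y) = 1 − (2/n)(1 − 1/n)(1 − cos nt) if y = x, and P_{G_n,t}^x(y) = (2/n^2)(1 − cos nt) if y ≠ x. In particular P_{G_n,t}^x(y) does not depend on the structure of G_n beyond n. -/
open Matrix NormedSpace

lemma exp_mulVec_eigen {n : ℕ} (M : Matrix (Fin n) (Fin n) ℂ) (v : Fin n → ℂ) (μ : ℂ)
    (h : M *ᵥ v = μ • v) :
    NormedSpace.exp M *ᵥ v = NormedSpace.exp μ • v := by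
  letI : SeminormedRing (Matrix (Fin n) (Fin n) ℂ) := Matrix.linftyOpSemiNormedRing
  letI : NormedRing (Matrix (Fin n) (Fin n) ℂ) := Matrix.linftyOpNormedRing
  letI : NormedAlgebra ℂ (Matrix (Fin n) (Fin n) ℂ) := Matrix.linftyOpNormedAlgebra
  have hpow : ∀ k : ℕ, M ^ k *ᵥ v = (μ ^ k) • v := by
    intro k
    induction k with
    | zero => simp
    | succ k ih =>
      rw [pow_succ', pow_succ', ← mulVec_mulVec, ih, mulVec_smul, h, smul_smul, mul_comm]
  let g : Matrix (Fin n) (Fin n) ℂ →ₗ[ℂ] (Fin n → ℂ) :=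
    { toFun := fun A => A *ᵥ v
      map_add' := fun A B => add_mulVec A B v
      map_smul' := fun c A => smul_mulVec c A v }
  let gc : Matrix (Fin n) (Fin n) ℂ →L[ℂ] (Fin n → ℂ) := { toLinearMap := g, cont := g.continuous_of_finiteDimensional }
  have h1 : HasSum (fun k : ℕ => (((k.factorial : ℂ))⁻¹ • M ^ k)) (NormedSpace.exp M) :=
    NormedSpace.exp_series_hasSum_exp' M
  have h2 : HasSum (fun k : ℕ => gc (((k.factorial : ℂ))⁻¹ • M ^ k)) (gc (NormedSpace.exp M)) :=
    h1.mapL gc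
  have h3 : ∀ k : ℕ, gc (((k.factorial : ℂ))⁻¹ • M ^ k) = (((k.factorial : ℂ))⁻¹ • μ ^ k) • v := by
    intro k
    show ((((k.factorial : ℂ))⁻¹ • M ^ k) *ᵥ v) = _
    rw [smul_mulVec, hpow, smul_smul, smul_eq_mul]
  rw [funext h3] at h2
  have h4 : HasSum (fun k : ℕ => (((k.factorial : ℂ))⁻¹ • μ ^ k) • v) (NormedSpace.exp μ • v) := by
    have hs : HasSum (fun k : ℕ => (((k.factorial : ℂ))⁻¹ • μ ^ k)) (NormedSpace.exp μ) :=
      NormedSpace.exp_series_hasSum_exp' μ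
    exact hs.smul_const v
  exact h2.unique h4

lemma dominating_adj {n : ℕ} (G : SimpleGraph (Fin n)) [DecidableRel G.Adj]
    (x : Fin n) (hx : G.degree x = n - 1) : ∀ z : Fin n, z ≠ x → G.Adj x z := by
  have hsub : G.neighborFinset x ⊆ Finset.univ.erase x := by
    intro z hz
    exact Finset.mem_erase.2 ⟨((SimpleGraph.mem_neighborFinset G x z).1 hz).ne',
      Finset.mem_univ z⟩
  have hcard : (Finset.univ.erase x).card ≤ (G.neighborFinset x).card := by
    rw [Finset.card_erase_of_mem (Finset.mem_univ x), Finset.card_univ, Fintype.card_fin,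
      SimpleGraph.card_neighborFinset_eq_degree, hx]
  have heq := Finset.eq_of_subset_of_card_le hsub hcard
  intro z hz
  have : z ∈ G.neighborFinset x := heq ▸ Finset.mem_erase.2 ⟨hz, Finset.mem_univ z⟩
  exact (SimpleGraph.mem_neighborFinset G x z).1 this


open Matrix

/-- The CTQW started at a dominating vertex has explicit transition probabilities
depending only on `n`. -/
theorem ctqw_dominating_vertex (n : ℕ) (G : SimpleGraph (Fin n)) [DecidableRel G.Adj]
    (x : Fin n) (hx : G.degree x = n - 1) (t : ℝ) (y : Fin n) :
    ctqwP G t x y =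
      if y = x then 1 - (2 / n) * (1 - 1 / n) * (1 - Real.cos (n * t))
      else (2 / (n : ℝ) ^ 2) * (1 - Real.cos (n * t)) := by
  have hn : 0 < n := x.pos
  have hnR : (0:ℝ) < n := by exact_mod_cast hn
  have hnC : (n:ℂ) ≠ 0 := by exact_mod_cast hn.ne'
  set L : Matrix (Fin n) (Fin n) ℂ := G.lapMatrix ℂ with hLdef
  set M : Matrix (Fin n) (Fin n) ℂ := (Complex.I * t) • L with hMdef
  set u : Fin n → ℂ := fun _ => (n:ℂ)⁻¹ with hudef
  set w : Fin n → ℂ := Pi.single x 1 - u with hwdef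
  have hadj := dominating_adj G x hx
  have hu0 : L *ᵥ u = 0 := by
    have : u = (n:ℂ)⁻¹ • (fun _ => (1:ℂ)) := by funext v; simp [hudef]
    rw [this, mulVec_smul, G.lapMatrix_mulVec_const_eq_zero, smul_zero]
  have hLw : L *ᵥ w = (n:ℂ) • w := by
    rw [hwdef, mulVec_sub, hu0, sub_zero]
    funext v
    rw [G.lapMatrix_mulVec_apply]
    by_cases hv : v = x
    · subst hv
      have h2 : ∑ z ∈ G.neighborFinset v, Pi.single v (1:ℂ) z = 0 := by
        apply Finset.sum_eq_zero
        intro z hz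
        have : z ≠ v := fun h => by simp [h] at hz
        simp [Pi.single_apply, this]
      simp only [h2, sub_zero, Pi.single_eq_same, mul_one, hx]
      have : ((n - 1 : ℕ) : ℂ) = (n:ℂ) - 1 := by
        push_cast [Nat.cast_sub hn]; ring
      rw [this]
      simp [hudef, Pi.smul_apply, Pi.sub_apply, Pi.single_eq_same, smul_eq_mul,
        mul_sub, mul_inv_cancel₀ hnC]
    · have hA : G.Adj v x := (hadj v hv).symm
      have hmem : x ∈ G.neighborFinset v := (SimpleGraph.mem_neighborFinset G v x).2 hA
      have h2 : ∑ z ∈ G.neighborFinset v, Pi.single x (1:ℂ) z = 1 := by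
        rw [Finset.sum_eq_single_of_mem x hmem]
        · simp
        · intro z _ hzx; simp [Pi.single_apply, hzx]
      rw [h2]
      simp [Pi.single_apply, hv, hudef, mul_inv_cancel₀ hnC]
  have hMu : M *ᵥ u = (0:ℂ) • u := by
    rw [hMdef, smul_mulVec, hu0, smul_zero, zero_smul]
  have hMw : M *ᵥ w = (Complex.I * t * n) • w := by
    rw [hMdef, smul_mulVec, hLw, smul_smul]
  have hexp : NormedSpace.exp M *ᵥ Pi.single x 1
      = u + Complex.exp (Complex.I * t * n) • w := by
    have hsplit : (Pi.single x (1:ℂ)) = u + w := by rw [hwdef]; ring_nf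
    rw [hsplit, mulVec_add, exp_mulVec_eigen M u 0 hMu, exp_mulVec_eigen M w _ hMw,
      NormedSpace.exp_zero, one_smul, ← Complex.exp_eq_exp_ℂ]
  have hcol : (NormedSpace.exp M *ᵥ Pi.single x 1) y = NormedSpace.exp M y x := by
    simp [mulVec, dotProduct, Pi.single_apply]
  have hsym : NormedSpace.exp M y x = NormedSpace.exp M x y := by
    have hMT : Mᵀ = M := by
      rw [hMdef, transpose_smul, hLdef, (G.isSymm_lapMatrix (R := ℂ)).eq]
    conv_lhs => rw [← hMT]
    rw [Matrix.exp_transpose, transpose_apply]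
  have hval : NormedSpace.exp M x y = u y + Complex.exp (Complex.I * t * n) * w y := by
    rw [← hsym, ← hcol, hexp]; simp
  have hθ : Complex.exp (Complex.I * t * n) = Complex.exp ((↑((n:ℝ)*t)) * Complex.I) := by
    push_cast; ring_nf
  rw [ctqwP, hval, hθ]
  have hpy : Real.sin ((n:ℝ)*t) ^ 2 + Real.cos ((n:ℝ)*t) ^ 2 = 1 :=
    Real.sin_sq_add_cos_sq _
  by_cases hy : y = x
  · subst hy
    have hz : u y + Complex.exp ((↑((n:ℝ)*t)) * Complex.I) * w y
        = Complex.ofReal ((n:ℝ)⁻¹ + Real.cos ((n:ℝ)*t) * (1 - (n:ℝ)⁻¹))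
          + Complex.ofReal (Real.sin ((n:ℝ)*t) * (1 - (n:ℝ)⁻¹)) * Complex.I := by
      rw [Complex.exp_mul_I]
      simp [hudef, hwdef, Pi.single_eq_same, Complex.ext_iff]
      constructor <;> ring
    rw [if_pos rfl, hz, Complex.sq_norm, Complex.normSq_apply]
    simp only [Complex.add_re, Complex.add_im, Complex.ofReal_re, Complex.ofReal_im,
      Complex.mul_re, Complex.mul_im, Complex.I_re, Complex.I_im]
    have h1n : (n:ℝ) ≠ 0 := hnR.ne'
    field_simp
    nlinarith [hpy, sq_nonneg ((n:ℝ))]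
  · have hz : u y + Complex.exp ((↑((n:ℝ)*t)) * Complex.I) * w y
        = Complex.ofReal ((n:ℝ)⁻¹ - Real.cos ((n:ℝ)*t) * (n:ℝ)⁻¹)
          + Complex.ofReal (- Real.sin ((n:ℝ)*t) * (n:ℝ)⁻¹) * Complex.I := by
      rw [Complex.exp_mul_I]
      simp [hudef, hwdef, Pi.single_apply, hy, Complex.ext_iff]
      constructor <;> ring
    rw [if_neg hy, hz, Complex.sq_norm, Complex.normSq_apply]
    simp only [Complex.add_re, Complex.add_im, Complex.ofReal_re, Complex.ofReal_im,
      Complex.mul_re, Complex.mul_im, Complex.I_re, Complex.I_im]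
    have h1n : (n:ℝ) ≠ 0 := hnR.ne'
    field_simp
    nlinarith [hpy, sq_nonneg ((n:ℝ))]
end

section
/- Let (G_n) be a sequence of simple graphs where G_n has n vertices, and suppose each G_n has a dominating vertex x_n. Then for every fixed t ≥ 0, lim_{n→∞} P_{G_n,t}^{x_n}(x_n) = 1 (strong localization at dominating vertices). -/
open Matrix Filter Nat

lemma pow_mulVec_eigen {n : Type*} [Fintype n] [DecidableEq n]
    (A : Matrix n n ℂ) (v : n → ℂ) (c : ℂ) (h : A *ᵥ v = c • v) (k : ℕ) :
    (A ^ k) *ᵥ v = (c ^ k) • v := by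
  induction k with
  | zero => simp
  | succ k ih =>
    rw [pow_succ, ← mulVec_mulVec, h, mulVec_smul, ih, smul_smul, pow_succ, mul_comm]

lemma exp_mulVec_eigen_s12 {n : Type*} [Fintype n] [DecidableEq n]
    (A : Matrix n n ℂ) (v : n → ℂ) (c : ℂ) (h : A *ᵥ v = c • v) :
    (NormedSpace.exp A) *ᵥ v = Complex.exp c • v := by
  letI : SeminormedRing (Matrix n n ℂ) := Matrix.linftyOpSemiNormedRing
  letI : NormedRing (Matrix n n ℂ) := Matrix.linftyOpNormedRing
  letI : NormedAlgebra ℂ (Matrix n n ℂ) := Matrix.linftyOpNormedAlgebra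
  let L : Matrix n n ℂ →ₗ[ℂ] (n → ℂ) :=
    { toFun := fun B => B *ᵥ v
      map_add' := fun B C => Matrix.add_mulVec B C v
      map_smul' := fun r B => (smul_mulVec r B v) }
  have hL : Continuous L := L.continuous_of_finiteDimensional
  have hsum : Summable (fun k : ℕ => ((k ! : ℂ))⁻¹ • A ^ k) :=
    NormedSpace.expSeries_summable' (𝕂 := ℂ) A
  have key : L (NormedSpace.exp A) = ∑' k : ℕ, ((k ! : ℂ))⁻¹ • ((A ^ k) *ᵥ v) := by
    rw [NormedSpace.exp_eq_tsum ℂ]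
    have h2 := (hsum.hasSum.map L.toAddMonoidHom hL).tsum_eq
    simp only [Function.comp, LinearMap.toAddMonoidHom_coe, _root_.map_smul] at h2
    exact h2.symm
  show L (NormedSpace.exp A) = Complex.exp c • v
  rw [key]
  simp_rw [pow_mulVec_eigen A v c h, smul_smul]
  have hs : Summable (fun k : ℕ => ((k ! : ℂ))⁻¹ * c ^ k) := by
    simpa [smul_eq_mul] using NormedSpace.expSeries_summable' (𝕂 := ℂ) c
  rw [hs.tsum_smul_const, Complex.exp_eq_exp_ℂ, NormedSpace.exp_eq_tsum ℂ]
  simp [smul_eq_mul]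


lemma dom_entry_eq {m : ℕ} (G : SimpleGraph (Fin (m+1))) [DecidableRel G.Adj]
    (x : Fin (m+1)) (hx : G.degree x = m) (t : ℝ) :
    (NormedSpace.exp ((Complex.I * t) • (G.lapMatrix ℂ))) x x
      = Complex.exp (Complex.I * t * ((m:ℂ)+1)) * (1 - ((m:ℂ)+1)⁻¹) + ((m:ℂ)+1)⁻¹ := by
  have hn : ((m:ℂ)+1) ≠ 0 := by
    exact_mod_cast Nat.cast_add_one_ne_zero (R := ℂ) m
  -- x is adjacent to every other vertex
  have hNx : G.neighborFinset x = Finset.univ.erase x := by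
    apply Finset.eq_of_subset_of_card_le
    · intro y hy
      rw [Finset.mem_erase]
      exact ⟨(G.ne_of_adj ((SimpleGraph.mem_neighborFinset G x y).mp hy)).symm,
        Finset.mem_univ y⟩
    · rw [Finset.card_erase_of_mem (Finset.mem_univ x), Finset.card_univ,
        Fintype.card_fin, G.card_neighborFinset_eq_degree, hx]
      simp
  have hadj : ∀ y : Fin (m+1), y ≠ x → G.Adj x y := by
    intro y hy
    rw [← SimpleGraph.mem_neighborFinset, hNx, Finset.mem_erase]
    exact ⟨hy, Finset.mem_univ y⟩
  set e : Fin (m+1) → ℂ := fun u => if u = x then 1 else 0 with he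
  set o : Fin (m+1) → ℂ := fun _ => 1 with ho
  have hLe : G.lapMatrix ℂ *ᵥ e = ((m:ℂ)+1) • e - o := by
    ext y
    rw [SimpleGraph.lapMatrix_mulVec_apply]
    have hsum : ∑ u ∈ G.neighborFinset y, e u = if x ∈ G.neighborFinset y then 1 else 0 := by
      simp [he, Finset.sum_ite_eq']
    by_cases hy : y = x
    · rw [hsum, hy]
      have hxx : x ∉ G.neighborFinset x := by simp
      simp only [if_neg hxx, he, ho, hx, Pi.sub_apply, Pi.smul_apply, smul_eq_mul,
        if_pos rfl]
      push_cast
      ring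
    · have : x ∈ G.neighborFinset y := by
        rw [SimpleGraph.mem_neighborFinset]
        exact (hadj y hy).symm
      simp [hsum, this, he, ho, hy]
  set v : Fin (m+1) → ℂ := e - (((m:ℂ)+1)⁻¹) • o with hv
  have hLv : G.lapMatrix ℂ *ᵥ v = ((m:ℂ)+1) • v := by
    rw [hv, mulVec_sub, mulVec_smul, hLe, G.lapMatrix_mulVec_const_eq_zero,
      smul_zero, sub_zero, smul_sub, smul_smul, mul_inv_cancel₀ hn, one_smul]
  have hMv : ((Complex.I * t) • G.lapMatrix ℂ) *ᵥ v = (Complex.I * t * ((m:ℂ)+1)) • v := by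
    rw [smul_mulVec, hLv, smul_smul]
  have hMo : ((Complex.I * t) • G.lapMatrix ℂ) *ᵥ o = (0:ℂ) • o := by
    rw [smul_mulVec, ho, G.lapMatrix_mulVec_const_eq_zero, smul_zero, zero_smul]
  have h1 := exp_mulVec_eigen_s12 _ v _ hMv
  have h2 := exp_mulVec_eigen_s12 _ o _ hMo
  rw [Complex.exp_zero, one_smul] at h2
  have hdec : e = v + (((m:ℂ)+1)⁻¹) • o := by rw [hv]; ring_nf
  have hmain : (NormedSpace.exp ((Complex.I * t) • G.lapMatrix ℂ)) *ᵥ e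
      = Complex.exp (Complex.I * t * ((m:ℂ)+1)) • v + (((m:ℂ)+1)⁻¹) • o := by
    rw [hdec, mulVec_add, mulVec_smul, h1, h2]
  have hentry : (NormedSpace.exp ((Complex.I * t) • G.lapMatrix ℂ)) x x
      = ((NormedSpace.exp ((Complex.I * t) • G.lapMatrix ℂ)) *ᵥ e) x := by
    simp [mulVec, dotProduct, he, mul_ite, Finset.sum_ite_eq']
  rw [hentry, hmain]
  simp [hv, he, ho]

/-- Strong localization at dominating vertices: the return probability tends to `1`. -/
theorem ctqw_strong_localization_dominating
    (G : (m : ℕ) → SimpleGraph (Fin (m + 1)))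
    (hdec : ∀ m, DecidableRel (G m).Adj)
    (x : (m : ℕ) → Fin (m + 1))
    (hx : ∀ m, (G m).degree (x m) = m)
    (t : ℝ) (ht : 0 ≤ t) :
    Tendsto (fun m => @ctqwP _ _ _ (G m) (hdec m) t (x m) (x m)) atTop (nhds 1) := by
  set f : ℕ → ℝ := fun m => @ctqwP _ _ _ (G m) (hdec m) t (x m) (x m) with hf
  have key : ∀ m : ℕ, f m =
      ‖Complex.exp (Complex.I * t * ((m:ℂ)+1)) * ((((1 - ((m:ℝ)+1)⁻¹ : ℝ)) : ℂ))
        + ((((m:ℝ)+1)⁻¹ : ℝ) : ℂ)‖ ^ 2 := by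
    intro m
    rw [hf]
    show ‖(NormedSpace.exp
      ((Complex.I * t) • ((G m).lapMatrix ℂ))) (x m) (x m)‖ ^ 2 = _
    rw [@dom_entry_eq m (G m) (hdec m) (x m) (hx m) t]
    norm_num
  have habs_exp : ∀ m : ℕ,
      ‖Complex.exp (Complex.I * t * ((m:ℂ)+1))‖ = 1 := by
    intro m
    have : Complex.I * (t:ℂ) * ((m:ℂ)+1) = ((t*((m:ℝ)+1) : ℝ):ℂ) * Complex.I := by
      push_cast; ring
    rw [this, Complex.norm_exp_ofReal_mul_I]
  have ha0 : ∀ m : ℕ, (0:ℝ) ≤ ((m:ℝ)+1)⁻¹ := fun m => by positivity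
  have ha1 : ∀ m : ℕ, ((m:ℝ)+1)⁻¹ ≤ 1 := fun m => by
    rw [inv_le_one_iff₀]; right; linarith [Nat.cast_nonneg (α := ℝ) m]
  have hupper : ∀ m : ℕ, f m ≤ 1 := by
    intro m
    rw [key m]
    have h1 : ‖Complex.exp (Complex.I * t * ((m:ℂ)+1))
        * ((((1 - ((m:ℝ)+1)⁻¹ : ℝ)) : ℂ)) + ((((m:ℝ)+1)⁻¹ : ℝ) : ℂ)‖ ≤ 1 := by
      refine (norm_add_le _ _).trans ?_
      rw [norm_mul, habs_exp, one_mul, Complex.norm_real, Complex.norm_real,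
        Real.norm_of_nonneg (by linarith [ha1 m]), Real.norm_of_nonneg (ha0 m)]
      linarith
    calc ‖_‖ ^ 2 ≤ 1 ^ 2 := by
          exact pow_le_pow_left₀ (norm_nonneg _) h1 2
      _ = 1 := one_pow 2
  have hlower : ∀ᶠ m : ℕ in atTop, (1 - 2*((m:ℝ)+1)⁻¹) ^ 2 ≤ f m := by
    filter_upwards [eventually_ge_atTop 1] with m hm
    rw [key m]
    set a : ℝ := ((m:ℝ)+1)⁻¹ with hadef
    have ha2 : 2 * a ≤ 1 := by
      rw [hadef]
      have hm2 : (2:ℝ) ≤ (m:ℝ)+1 := by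
        have : (1:ℝ) ≤ (m:ℝ) := by exact_mod_cast hm
        linarith
      have hmul : ((m:ℝ)+1) * ((m:ℝ)+1)⁻¹ = 1 := mul_inv_cancel₀ (by linarith)
      nlinarith [ha0 m]
    have hge : 1 - 2*a ≤ ‖Complex.exp (Complex.I * t * ((m:ℂ)+1))
        * (((1 - a : ℝ)) : ℂ) + ((a : ℝ) : ℂ)‖ := by
      have htri : ‖Complex.exp (Complex.I * t * ((m:ℂ)+1)) * (((1 - a : ℝ)) : ℂ)‖
          ≤ ‖Complex.exp (Complex.I * t * ((m:ℂ)+1)) * (((1 - a : ℝ)) : ℂ)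
            + ((a : ℝ) : ℂ)‖ + ‖((a : ℝ) : ℂ)‖ := by
        calc ‖_‖ = ‖(Complex.exp (Complex.I * t * ((m:ℂ)+1))
              * (((1 - a : ℝ)) : ℂ) + ((a : ℝ) : ℂ)) + (-((a : ℝ) : ℂ))‖ := by congr 1; ring
          _ ≤ _ + ‖-((a : ℝ) : ℂ)‖ := norm_add_le _ _
          _ = _ + ‖((a : ℝ) : ℂ)‖ := by rw [norm_neg]
      rw [norm_mul, habs_exp, one_mul, Complex.norm_real, Complex.norm_real,
        Real.norm_of_nonneg (by linarith [ha1 m]), Real.norm_of_nonneg (ha0 m)] at htri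
      linarith
    exact pow_le_pow_left₀ (by linarith) hge 2
  have hlim : Tendsto (fun m : ℕ => (1 - 2*((m:ℝ)+1)⁻¹) ^ 2) atTop (nhds 1) := by
    have h0 : Tendsto (fun m : ℕ => ((m:ℝ)+1)⁻¹) atTop (nhds 0) := by
      simpa [one_div] using tendsto_one_div_add_atTop_nhds_zero_nat (𝕜 := ℝ)
    have : Tendsto (fun m : ℕ => 1 - 2*((m:ℝ)+1)⁻¹) atTop (nhds (1 - 2*0)) :=
      tendsto_const_nhds.sub (h0.const_mul 2)
    have h2 := this.pow 2
    norm_num at h2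
    exact h2
  exact tendsto_of_tendsto_of_tendsto_of_le_of_le' hlim tendsto_const_nhds hlower
    (Eventually.of_forall hupper)
end
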